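/- Every context adaptive BWT is invertible: fix a finite alphabet Σ, a context adaptive ordering (π_x), and n ≥ 1. If s and t are primitive strings of length n over Σ such that BWT_*(s) = BWT_*(t) and #{u : u is a rotation of s with u ≺ s} = #{u : u is a rotation of t with u ≺ t} (i.e., s and t occupy the same row index in their respective sorted rotation matrices), then s = t. -/

import Mathlib

set_option linter.unusedSectionVars false


open scoped Classical

variable {A : Type*}

/-- Longest common prefix of two lists. -/
def lcp [DecidableEq A] : List A → List A → List A
  | a :: as, b :: bs => if a = b then a :: lcp as bs else []
  | _, _ => []

/-- A string is primitive if its cyclic rotations are pairwise distinct. -/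
def Primitive (s : List A) : Prop :=
  ∀ i j, i < s.length → j < s.length → s.rotate i = s.rotate j → i = j

/-- The context-adaptive comparison relation on rotations. -/
def Prec [DecidableEq A] (π : List A → A → A → Prop) (u v : List A) : Prop :=
  ∃ a b, u[(lcp u v).length]? = some a ∧ v[(lcp u v).length]? = some b ∧
    π (lcp u v) a b

/-- `rank π s i` is the row index of the rotation `s.rotate i` in the sorted
rotation matrix `M_*(s)`, i.e. the number of rotations that `≺`-precede it. -/
noncomputable def rank [DecidableEq A] (π : List A → A → A → Prop)
    (s : List A) (i : ℕ) : ℕ :=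
  ((Finset.range s.length).filter
    (fun j => Prec π (s.rotate j) (s.rotate i))).card

/-- `bwtStar π s` is the string `L = BWT_*(s)`: the rotation indices sorted by
their rank (i.e. by `≺`), each mapped to the last symbol of its rotation. -/
noncomputable def bwtStar [DecidableEq A] (π : List A → A → A → Prop)
    (s : List A) : List A :=
  ((List.range s.length).mergeSort
      (fun i j => rank π s i ≤ rank π s j)).filterMap
    (fun i => (s.rotate i).getLast?)

section lcpLemmas
variable [DecidableEq A]

theorem lcp_self (u : List A) : lcp u u = u := by
  induction u with
  | nil => rfl
  | cons a as ih => simp [lcp, ih]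

theorem lcp_comm (u v : List A) : lcp u v = lcp v u := by
  induction u generalizing v with
  | nil => cases v <;> rfl
  | cons a as ih =>
    cases v with
    | nil => rfl
    | cons b bs =>
      by_cases h : a = b
      · subst h; simp [lcp, ih]
      · simp [lcp, h, Ne.symm h]

theorem lcp_prefix_left (u v : List A) : lcp u v <+: u := by
  induction u generalizing v with
  | nil => cases v <;> simp [lcp]
  | cons a as ih =>
    cases v with
    | nil => simp [lcp]
    | cons b bs =>
      by_cases h : a = b
      · subst h
        simp only [lcp, if_pos rfl]
        obtain ⟨w, hw⟩ := ih bs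
        exact ⟨w, by simp [hw]⟩
      · simp [lcp, h]

theorem lcp_prefix_right (u v : List A) : lcp u v <+: v := by
  rw [lcp_comm]; exact lcp_prefix_left v u

theorem lcp_append (x : List A) {a b : A} (u v : List A) (hab : a ≠ b) :
    lcp (x ++ a :: u) (x ++ b :: v) = x := by
  induction x with
  | nil => simp [lcp, hab]
  | cons c cs ih => simp [lcp, ih]

theorem prefix_decomp {x u : List A} (h : x <+: u) {a : A}
    (ha : u[x.length]? = some a) : u = x ++ a :: u.drop (x.length + 1) := by
  obtain ⟨t, rfl⟩ := h
  cases t with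
  | nil => simp at ha
  | cons c cs =>
    rw [List.getElem?_append_right le_rfl] at ha
    simp only [Nat.sub_self, List.getElem?_cons_zero, Option.some.injEq] at ha
    subst ha
    simp

/-- decomposition from a `Prec` witness -/
theorem prec_elim {π : List A → A → A → Prop} {u v : List A} (h : Prec π u v) :
    ∃ x a b u₁ v₁, u = x ++ a :: u₁ ∧ v = x ++ b :: v₁ ∧ x = lcp u v ∧
      π x a b := by
  obtain ⟨a, b, ha, hb, hab⟩ := h
  exact ⟨lcp u v, a, b, _, _, prefix_decomp (lcp_prefix_left u v) ha,
    prefix_decomp (lcp_prefix_right u v) hb, rfl, hab⟩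

/-- introduction -/
theorem prec_intro {π : List A → A → A → Prop} {x u₁ v₁ : List A} {a b : A}
    (hab : a ≠ b) (h : π x a b) : Prec π (x ++ a :: u₁) (x ++ b :: v₁) := by
  refine ⟨a, b, ?_, ?_, ?_⟩ <;> rw [lcp_append x u₁ v₁ hab]
  · rw [List.getElem?_append_right le_rfl]; simp
  · rw [List.getElem?_append_right le_rfl]; simp
  · exact h

variable {π : List A → A → A → Prop}

theorem prec_irrefl (u : List A) : ¬ Prec π u u := by
  rintro ⟨a, b, ha, _, _⟩
  rw [lcp_self] at ha
  simp at ha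

theorem prec_asymm (hπ : ∀ x, IsStrictTotalOrder A (π x)) {u v : List A}
    (h : Prec π u v) : ¬ Prec π v u := by
  rintro ⟨c, d, hc, hd, hcd⟩
  obtain ⟨a, b, ha, hb, hab⟩ := h
  rw [lcp_comm v u] at hc hd hcd
  rw [ha] at hd
  rw [hb] at hc
  obtain rfl : a = d := by injection hd
  obtain rfl : b = c := by injection hc
  exact (hπ _).irrefl a ((hπ _).trans _ _ _ hab hcd)

theorem prec_trichotomy (hπ : ∀ x, IsStrictTotalOrder A (π x)) {u v : List A}
    (hlen : u.length = v.length) (hne : u ≠ v) : Prec π u v ∨ Prec π v u := by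
  -- there is a mismatch at position (lcp u v).length
  have key : ∀ u v : List A, u.length = v.length → u ≠ v →
      ∃ a b, u[(lcp u v).length]? = some a ∧ v[(lcp u v).length]? = some b ∧
        a ≠ b := by
    intro u
    induction u with
    | nil => intro v h hne; cases v <;> simp_all
    | cons a as ih =>
      intro v h hne
      cases v with
      | nil => simp at h
      | cons b bs =>
        by_cases hab : a = b
        · subst hab
          have : as ≠ bs := by rintro rfl; exact hne rfl
          obtain ⟨c, d, hc, hd, hcd⟩ := ih bs (by simpa using h) this
          exact ⟨c, d, by simpa [lcp], by simpa [lcp], hcd⟩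
        · exact ⟨a, b, by simp [lcp, hab], by simp [lcp, hab], hab⟩
  obtain ⟨a, b, ha, hb, hab⟩ := key u v hlen hne
  rcases (haveI := hπ (lcp u v); trichotomous_of (π (lcp u v)) a b) with h | h | h
  · exact Or.inl ⟨a, b, ha, hb, h⟩
  · exact absurd h hab
  · exact Or.inr ⟨b, a, by rw [lcp_comm v u]; exact hb, by rw [lcp_comm v u]; exact ha,
      by rw [lcp_comm v u]; exact h⟩

theorem prec_trans (hπ : ∀ x, IsStrictTotalOrder A (π x)) {u v w : List A}
    (h1 : Prec π u v) (h2 : Prec π v w) : Prec π u w := by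
  obtain ⟨x, a, b, u₁, v₁, hu, hv, -, hab⟩ := prec_elim h1
  obtain ⟨y, b', c, v₂, w₁, hv', hw, -, hbc⟩ := prec_elim h2
  have hab' : a ≠ b := fun h => by subst h; exact (hπ x).irrefl a hab
  have hbc' : b' ≠ c := fun h => by subst h; exact (hπ y).irrefl _ hbc
  rcases lt_trichotomy x.length y.length with hl | hl | hl
  · -- y = x ++ b :: y₁
    have hyv : y <+: v := ⟨b' :: v₂, hv'.symm⟩
    have hxv : x <+: v := ⟨b :: v₁, hv.symm⟩
    have hxy : x <+: y := List.prefix_of_prefix_length_le hxv hyv (le_of_lt hl)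
    have hyb : y[x.length]? = some b := by
      have : v[x.length]? = some b := by
        rw [hv, List.getElem?_append_right le_rfl]; simp
      rw [hv'] at this
      rwa [List.getElem?_append_left (by omega)] at this
    have hy : y = x ++ b :: y.drop (x.length + 1) := prefix_decomp hxy hyb
    rw [hw, hy, List.append_assoc]
    rw [hu]
    exact prec_intro hab' hab
  · -- x = y, b = b'
    have hxy : x = y := by
      have h1 : x <+: v := ⟨b :: v₁, hv.symm⟩
      have h2 : y <+: v := ⟨b' :: v₂, hv'.symm⟩
      exact List.prefix_of_prefix_length_le h1 h2 (le_of_eq hl) |>.eq_of_length hl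
    subst hxy
    have hbb : b = b' := by
      have h1 : v[x.length]? = some b := by
        rw [hv, List.getElem?_append_right le_rfl]; simp
      have h2 : v[x.length]? = some b' := by
        rw [hv', List.getElem?_append_right le_rfl]; simp
      rw [h1] at h2; injection h2
    subst hbb
    have hac : a ≠ c := fun h => by
      subst h
      exact (hπ x).irrefl a ((hπ x).trans _ _ _ hab hbc)
    rw [hu, hw]
    exact prec_intro hac ((hπ x).trans _ _ _ hab hbc)
  · -- x = y ++ b' :: x₁
    have hyx : y <+: x := by
      have h1 : x <+: v := ⟨b :: v₁, hv.symm⟩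
      have h2 : y <+: v := ⟨b' :: v₂, hv'.symm⟩
      exact List.prefix_of_prefix_length_le h2 h1 (le_of_lt hl)
    have hxb : x[y.length]? = some b' := by
      have : v[y.length]? = some b' := by
        rw [hv', List.getElem?_append_right le_rfl]; simp
      rw [hv] at this
      rwa [List.getElem?_append_left (by omega)] at this
    have hx : x = y ++ b' :: x.drop (y.length + 1) := prefix_decomp hyx hxb
    rw [hu, hx, List.append_assoc, hw]
    exact prec_intro hbc' hbc

theorem prec_take (hπ : ∀ x, IsStrictTotalOrder A (π x)) {u v : List A} (M : ℕ)
    (h : Prec π u v) :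
    u.take M = v.take M ∨ Prec π (u.take M) (v.take M) := by
  obtain ⟨x, a, b, u₁, v₁, hu, hv, -, hab⟩ := prec_elim h
  have hab' : a ≠ b := fun h => by subst h; exact (hπ x).irrefl _ hab
  by_cases hM : M ≤ x.length
  · left
    rw [hu, hv, List.take_append_of_le_length hM, List.take_append_of_le_length hM]
  · right
    push_neg at hM
    have h1 : ∀ (c : A) (l : List A), (x ++ c :: l).take M
        = x ++ c :: l.take (M - x.length - 1) := by
      intro c l
      rw [List.take_append, List.take_of_length_le (by omega)]
      congr 1
      have : M - x.length = (M - x.length - 1) + 1 := by omega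
      rw [this, List.take_succ_cons]
      simp
    rw [hu, hv, h1, h1]
    exact prec_intro hab' hab

end lcpLemmas

section rankLemmas
variable [DecidableEq A] {π : List A → A → A → Prop}
  (hπ : ∀ x, IsStrictTotalOrder A (π x)) {s : List A}
include hπ

theorem rank_lt_rank (hprim : Primitive s) {i j : ℕ}
    (hi : i < s.length) (hj : j < s.length)
    (h : Prec π (s.rotate i) (s.rotate j)) : rank π s i < rank π s j := by
  apply Finset.card_lt_card
  constructor
  · intro j' hj'
    simp only [Finset.mem_filter, Finset.mem_range] at hj' ⊢
    exact ⟨hj'.1, prec_trans hπ hj'.2 h⟩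
  · intro hc
    have h1 : i ∈ (Finset.range s.length).filter
        (fun j' => Prec π (s.rotate j') (s.rotate j)) := by
      simp only [Finset.mem_filter, Finset.mem_range]
      exact ⟨hi, h⟩
    have h2 := hc h1
    simp only [Finset.mem_filter, Finset.mem_range] at h2
    exact prec_irrefl _ h2.2

omit hπ in
theorem rank_lt_length {i : ℕ} (hi : i < s.length) : rank π s i < s.length := by
  have hsub : (Finset.range s.length).filter
      (fun j => Prec π (s.rotate j) (s.rotate i)) ⊆ (Finset.range s.length).erase i := by
    intro j hj
    simp only [Finset.mem_filter, Finset.mem_range] at hj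
    refine Finset.mem_erase.2 ⟨?_, Finset.mem_range.2 hj.1⟩
    rintro rfl
    exact prec_irrefl _ hj.2
  calc rank π s i ≤ ((Finset.range s.length).erase i).card := Finset.card_le_card hsub
    _ < (Finset.range s.length).card :=
        Finset.card_erase_lt_of_mem (Finset.mem_range.2 hi)
    _ = s.length := Finset.card_range _

theorem rank_lt_iff (hprim : Primitive s) {i j : ℕ}
    (hi : i < s.length) (hj : j < s.length) :
    rank π s i < rank π s j ↔ Prec π (s.rotate i) (s.rotate j) := by
  constructor
  · intro h
    by_contra hc
    rcases eq_or_ne i j with rfl | hne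
    · exact lt_irrefl _ h
    · have hrot : s.rotate i ≠ s.rotate j := fun he => hne (hprim i j hi hj he)
      rcases prec_trichotomy hπ (by simp) hrot with h' | h'
      · exact hc h'
      · exact absurd h (not_lt_of_gt (rank_lt_rank hπ hprim hj hi h'))
  · exact rank_lt_rank hπ hprim hi hj

theorem rank_injOn (hprim : Primitive s) {i j : ℕ}
    (hi : i < s.length) (hj : j < s.length) (h : rank π s i = rank π s j) :
    i = j := by
  by_contra hne
  have hrot : s.rotate i ≠ s.rotate j := fun he => hne (hprim i j hi hj he)
  rcases prec_trichotomy hπ (by simp) hrot with h' | h'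
  · exact absurd h (ne_of_lt (rank_lt_rank hπ hprim hi hj h'))
  · exact absurd h.symm (ne_of_lt (rank_lt_rank hπ hprim hj hi h'))

theorem rank_surj (hprim : Primitive s) {k : ℕ} (hk : k < s.length) :
    ∃ i, i < s.length ∧ rank π s i = k := by
  have himg : (Finset.range s.length).image (rank π s) = Finset.range s.length := by
    apply Finset.eq_of_subset_of_card_le
    · intro x hx
      simp only [Finset.mem_image, Finset.mem_range] at hx ⊢
      obtain ⟨i, hi, rfl⟩ := hx
      exact rank_lt_length hi
    · rw [Finset.card_range, Finset.card_image_of_injOn]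
      · rw [Finset.card_range]
      · intro i hi j hj h
        exact rank_injOn hπ hprim (Finset.mem_range.1 hi) (Finset.mem_range.1 hj) h
  have : k ∈ (Finset.range s.length).image (rank π s) := by
    rw [himg]; exact Finset.mem_range.2 hk
  simp only [Finset.mem_image, Finset.mem_range] at this
  obtain ⟨i, hi, h⟩ := this
  exact ⟨i, hi, h⟩

end rankLemmas

section bwtLemmas
variable [DecidableEq A] {π : List A → A → A → Prop}

theorem bwtStar_eq (hπ : ∀ x, IsStrictTotalOrder A (π x)) {s : List A} {n : ℕ}
    (hslen : s.length = n) (hsprim : Primitive s)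
    {σ : ℕ → ℕ} (hσ : ∀ k, k < n → σ k < n ∧ rank π s (σ k) = k)
    {G : ℕ → A} (hG : ∀ i, (s.rotate i).getLast? = some (G i)) :
    bwtStar π s = (List.range n).map (fun k => G (σ k)) := by
  have key : ((List.range s.length).mergeSort
      (fun i j => rank π s i ≤ rank π s j)) = (List.range n).map σ := by
    rw [hslen]
    set le : ℕ → ℕ → Bool := fun i j => rank π s i ≤ rank π s j with hle
    have hperm1 : ((List.range n).mergeSort le).Perm (List.range n) :=
      List.mergeSort_perm _ _
    have hTnodup : ((List.range n).map σ).Nodup := by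
      refine List.Nodup.map_on ?_ List.nodup_range
      intro i hi j hj h
      rw [List.mem_range] at hi hj
      have h1 := (hσ i hi).2
      have h2 := (hσ j hj).2
      rw [← h1, ← h2, h]
    have hperm2 : ((List.range n).map σ).Perm (List.range n) := by
      apply List.Subperm.perm_of_length_le
      · apply List.subperm_of_subset hTnodup
        intro x hx
        simp only [List.mem_map, List.mem_range] at hx
        obtain ⟨k, hk, rfl⟩ := hx
        exact List.mem_range.2 (hσ k hk).1
      · simp
    set r : ℕ → ℕ → Prop := fun i j => i = j ∨ rank π s i < rank π s j with hr
    haveI : IsAntisymm ℕ r := ⟨by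
      intro i j hij hji
      rcases hij with rfl | h1
      · rfl
      rcases hji with rfl | h2
      · rfl
      exact absurd h2 (not_lt_of_gt h1)⟩
    refine List.Perm.eq_of_pairwise' (r := r) ?_ ?_ (hperm1.trans hperm2.symm)
    · have hsorted := List.pairwise_mergeSort (le := le)
        (fun a b c hab hbc => by
          simp only [hle, decide_eq_true_eq] at hab hbc ⊢
          exact le_trans hab hbc)
        (fun a b => by
          simp only [hle, Bool.or_eq_true, decide_eq_true_eq]
          exact le_total _ _)
        (List.range n)
      have hnodup : ((List.range n).mergeSort le).Nodup :=
        hperm1.nodup_iff.2 List.nodup_range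
      refine List.Pairwise.imp_of_mem ?_ (hsorted.and hnodup)
      intro a b ha hb hab
      have ha' : a < n := List.mem_range.1 (hperm1.subset ha)
      have hb' : b < n := List.mem_range.1 (hperm1.subset hb)
      right
      have hle' : rank π s a ≤ rank π s b := by
        have := hab.1
        simpa [hle, decide_eq_true_eq] using this
      rcases lt_or_eq_of_le hle' with h | h
      · exact h
      · exact absurd (rank_injOn hπ hsprim (hslen ▸ ha') (hslen ▸ hb') h) hab.2
    · refine (List.pairwise_map (R := r)).2 ?_
      refine List.Pairwise.imp_of_mem ?_ (List.pairwise_lt_range (n := n))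
      intro a b ha hb hab
      right
      rw [(hσ a (List.mem_range.1 ha)).2, (hσ b (List.mem_range.1 hb)).2]
      exact hab
  unfold bwtStar
  rw [key, List.filterMap_map]
  have : (fun i => (s.rotate i).getLast?) ∘ σ = some ∘ (fun k => G (σ k)) := by
    funext k
    simp [hG (σ k)]
  rw [this, List.filterMap_eq_map]

end bwtLemmas

section mainLemmas
variable [DecidableEq A] {π : List A → A → A → Prop}

theorem sigma_perm {s : List A} {n : ℕ} {σ : ℕ → ℕ}
    (hσ : ∀ k, k < n → σ k < n ∧ rank π s (σ k) = k) :
    ((List.range n).map σ).Perm (List.range n) := by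
  have hTnodup : ((List.range n).map σ).Nodup := by
    refine List.Nodup.map_on ?_ List.nodup_range
    intro i hi j hj h
    rw [List.mem_range] at hi hj
    rw [← (hσ i hi).2, ← (hσ j hj).2, h]
  apply List.Subperm.perm_of_length_le
  · apply List.subperm_of_subset hTnodup
    intro x hx
    simp only [List.mem_map, List.mem_range] at hx
    obtain ⟨k, hk, rfl⟩ := hx
    exact List.mem_range.2 (hσ k hk).1
  · simp

theorem shift_perm {n : ℕ} (hn : 1 ≤ n) :
    ((List.range n).map (fun i => (i + 1) % n)).Perm (List.range n) := by
  have hmod : ∀ i, i < n → (i + 1) % n = if i + 1 = n then 0 else i + 1 := by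
    intro i hi
    split
    · next h => rw [h, Nat.mod_self]
    · next h => exact Nat.mod_eq_of_lt (by omega)
  have hnodup : ((List.range n).map (fun i => (i + 1) % n)).Nodup := by
    refine List.Nodup.map_on ?_ List.nodup_range
    intro i hi j hj h
    rw [List.mem_range] at hi hj
    rw [hmod i hi, hmod j hj] at h
    split at h <;> split at h <;> omega
  apply List.Subperm.perm_of_length_le
  · apply List.subperm_of_subset hnodup
    intro x hx
    simp only [List.mem_map, List.mem_range] at hx
    obtain ⟨k, hk, rfl⟩ := hx
    exact List.mem_range.2 (Nat.mod_lt _ (by omega))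
  · simp

theorem take_rotate_succ {s : List A} {n : ℕ} (hslen : s.length = n)
    {G : ℕ → A} (hG : ∀ i, (s.rotate i).getLast? = some (G i))
    {m : ℕ} (hm : m < n) (i : ℕ) :
    (s.rotate i).take (m + 1) = G (i + 1) :: (s.rotate (i + 1)).take m := by
  have hlen : (s.rotate i).length = n := by simp [hslen]
  have hrot1 : s.rotate (i + 1) = (s.rotate i).rotate 1 := by
    rw [List.rotate_rotate]
  cases h : s.rotate i with
  | nil => rw [h] at hlen; simp at hlen; omega
  | cons a z =>
    have hz : z.length = n - 1 := by rw [h] at hlen; simp at hlen; omega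
    have hrot : s.rotate (i + 1) = z ++ [a] := by
      rw [hrot1, h, List.rotate_cons_succ, List.rotate_zero]
    have hGa : G (i + 1) = a := by
      have := hG (i + 1)
      rw [hrot, List.getLast?_concat] at this
      injection this.symm
    rw [hGa, hrot, List.take_append_of_le_length (by omega), List.take_succ_cons]

theorem map_range_pointwise {B : Type*} {n : ℕ} {f g : ℕ → B}
    (h : (List.range n).map f = (List.range n).map g) :
    ∀ k, k < n → f k = g k := by
  intro k hk
  have := congrArg (fun l => l[k]?) h
  simpa [List.getElem?_map, List.getElem?_range hk] using this

end mainLemmas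

section colLemma
variable [DecidableEq A] {π : List A → A → A → Prop}

theorem column_perm {s : List A} {n : ℕ} (hslen : s.length = n)
    {σ : ℕ → ℕ} (hσ : ∀ k, k < n → σ k < n ∧ rank π s (σ k) = k)
    {G : ℕ → A} (hG : ∀ i, (s.rotate i).getLast? = some (G i))
    {m : ℕ} (hm : m < n) :
    (List.map (fun k => (s.rotate (σ k)).take (m + 1)) (List.range n)).Perm
      (List.map (fun k => G (σ k) :: (s.rotate (σ k)).take m) (List.range n)) := by
  set F1 : ℕ → List A := fun i => (s.rotate i).take (m + 1) with hF1
  set F2 : ℕ → List A := fun i => G i :: (s.rotate i).take m with hF2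
  have step1 : List.map (fun k => F1 (σ k)) (List.range n)
      = List.map F1 (List.map σ (List.range n)) := by rw [List.map_map]; rfl
  have step2 : (List.map F1 (List.map σ (List.range n))).Perm
      (List.map F1 (List.range n)) := (sigma_perm hσ).map F1
  have step3 : List.map F1 (List.range n)
      = List.map F2 (List.map (fun i => (i + 1) % n) (List.range n)) := by
    rw [List.map_map]
    refine List.map_congr_left ?_
    intro i _
    have hroteq : s.rotate ((i + 1) % n) = s.rotate (i + 1) := by
      rw [← hslen]; exact List.rotate_mod s (i + 1)
    have hGeq : G ((i + 1) % n) = G (i + 1) := by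
      have h1 := hG ((i + 1) % n)
      have h2 := hG (i + 1)
      rw [hroteq] at h1
      rw [h1] at h2
      injection h2
    show F1 i = F2 ((i + 1) % n)
    rw [hF1, hF2]
    simp only [hroteq, hGeq]
    exact take_rotate_succ hslen hG hm i
  have step4 : (List.map F2 (List.map (fun i => (i + 1) % n) (List.range n))).Perm
      (List.map F2 (List.range n)) := (shift_perm (by omega)).map F2
  have step5 : (List.map F2 (List.range n)).Perm
      (List.map F2 (List.map σ (List.range n))) := ((sigma_perm hσ).map F2).symm
  have step6 : List.map F2 (List.map σ (List.range n))
      = List.map (fun k => F2 (σ k)) (List.range n) := by rw [List.map_map]; rfl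
  rw [step1, ← step6]
  refine step2.trans ?_
  rw [step3]
  exact step4.trans step5

end colLemma


/-- every context adaptive BWT is invertible: if two primitive
strings of the same length `n ≥ 1` have the same transform `BWT_*` and occupy
the same row index in their respective sorted rotation matrices, then they are
equal.  (Note `s = s.rotate 0`, so `rank π s 0` is the row index of `s`.) -/
theorem stmt6 [Fintype A] [DecidableEq A]
    (π : List A → A → A → Prop) (hπ : ∀ x, IsStrictTotalOrder A (π x))
    (n : ℕ) (hn : 1 ≤ n)
    (s t : List A) (hslen : s.length = n) (htlen : t.length = n)
    (hsprim : Primitive s) (htprim : Primitive t)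
    (hbwt : bwtStar π s = bwtStar π t)
    (hrow : ((Finset.range s.length).filter
              (fun i => Prec π (s.rotate i) s)).card =
            ((Finset.range t.length).filter
              (fun i => Prec π (t.rotate i) t)).card) :
    s = t := by
  have hs0 : s ≠ [] := by rintro rfl; simp at hslen; omega
  have ht0 : t ≠ [] := by rintro rfl; simp at htlen; omega
  -- last-symbol functions
  set Gs : ℕ → A := fun i => (s.rotate i).getLast
    (fun h => hs0 (List.rotate_eq_nil_iff.mp h)) with hGsdef
  set Gt : ℕ → A := fun i => (t.rotate i).getLast
    (fun h => ht0 (List.rotate_eq_nil_iff.mp h)) with hGtdef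
  have hGs : ∀ i, (s.rotate i).getLast? = some (Gs i) := fun i =>
    List.getLast?_eq_getLast _
  have hGt : ∀ i, (t.rotate i).getLast? = some (Gt i) := fun i =>
    List.getLast?_eq_getLast _
  -- inverse of rank
  have hσs' : ∀ k, k < n → ∃ i, i < s.length ∧ rank π s i = k := by
    intro k hk
    exact rank_surj hπ hsprim (by omega)
  have hσt' : ∀ k, k < n → ∃ i, i < t.length ∧ rank π t i = k := by
    intro k hk
    exact rank_surj hπ htprim (by omega)
  set σs : ℕ → ℕ := fun k => if h : k < n then (hσs' k h).choose else 0 with hσsdef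
  set σt : ℕ → ℕ := fun k => if h : k < n then (hσt' k h).choose else 0 with hσtdef
  have hσs : ∀ k, k < n → σs k < n ∧ rank π s (σs k) = k := by
    intro k hk
    have := (hσs' k hk).choose_spec
    simp only [hσsdef, dif_pos hk]
    exact ⟨by omega, this.2⟩
  have hσt : ∀ k, k < n → σt k < n ∧ rank π t (σt k) = k := by
    intro k hk
    have := (hσt' k hk).choose_spec
    simp only [hσtdef, dif_pos hk]
    exact ⟨by omega, this.2⟩
  -- bwt characterization and pointwise last symbols
  have hBs := bwtStar_eq hπ hslen hsprim hσs hGs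
  have hBt := bwtStar_eq hπ htlen htprim hσt hGt
  have hlast : ∀ k, k < n → Gs (σs k) = Gt (σt k) :=
    map_range_pointwise (by rw [← hBs, ← hBt]; exact hbwt)
  -- same row index
  have hrow' : rank π s 0 = rank π t 0 := by
    simp only [rank, List.rotate_zero]
    exact hrow
  -- the key induction on prefix length
  have key : ∀ m, m ≤ n →
      List.map (fun k => (s.rotate (σs k)).take m) (List.range n) =
      List.map (fun k => (t.rotate (σt k)).take m) (List.range n) := by
    intro m
    induction m with
    | zero => intro _; simp
    | succ m ih =>
      intro hm1
      have hm : m < n := by omega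
      have IH := ih (by omega)
      have IHpt := map_range_pointwise IH
      -- permutation to the shifted column
      have hps := column_perm hslen hσs hGs hm
      have hpt := column_perm htlen hσt hGt hm
      have hmid : List.map (fun k => Gs (σs k) :: (s.rotate (σs k)).take m)
          (List.range n) =
          List.map (fun k => Gt (σt k) :: (t.rotate (σt k)).take m)
          (List.range n) := by
        refine List.map_congr_left ?_
        intro k hk
        rw [List.mem_range] at hk
        rw [hlast k hk, IHpt k hk]
      have hperm : (List.map (fun k => (s.rotate (σs k)).take (m + 1))
          (List.range n)).Perm
          (List.map (fun k => (t.rotate (σt k)).take (m + 1)) (List.range n)) :=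
        (hps.trans (hmid ▸ hpt.symm))
      -- sortedness
      set r' : List A → List A → Prop := fun p q => p = q ∨ Prec π p q with hr'
      haveI : IsAntisymm (List A) r' := ⟨by
        intro p q hpq hqp
        rcases hpq with rfl | h1
        · rfl
        rcases hqp with rfl | h2
        · rfl
        exact absurd h2 (prec_asymm hπ h1)⟩
      have hsorted : ∀ (u : List A) (σ : ℕ → ℕ)
          (hu : u.length = n) (huprim : Primitive u)
          (hσu : ∀ k, k < n → σ k < n ∧ rank π u (σ k) = k),
          List.Pairwise r' (List.map (fun k => (u.rotate (σ k)).take (m + 1))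
            (List.range n)) := by
        intro u σ hu huprim hσu
        refine (List.pairwise_map (R := r')).2 ?_
        refine List.Pairwise.imp_of_mem ?_ (List.pairwise_lt_range (n := n))
        intro a b ha hb hab
        rw [List.mem_range] at ha hb
        have ha1 := (hσu a ha).1
        have hb1 := (hσu b hb).1
        have hprec : Prec π (u.rotate (σ a)) (u.rotate (σ b)) := by
          rw [← rank_lt_iff hπ huprim (by omega) (by omega)]
          rw [(hσu a ha).2, (hσu b hb).2]
          exact hab
        rcases prec_take hπ (m + 1) hprec with h | h
        · exact Or.inl h
        · exact Or.inr h
      have heq := List.Perm.eq_of_pairwise'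
        (hsorted s σs hslen hsprim hσs) (hsorted t σt htlen htprim hσt) hperm
      exact heq
  -- conclude
  have hfull := key n le_rfl
  set r := rank π s 0 with hrdef
  have hr : r < n := by
    have := rank_lt_length (π := π) (s := s) (by omega : (0:ℕ) < s.length)
    omega
  have hpt := map_range_pointwise hfull r hr
  have hs_take : (s.rotate (σs r)).take n = s.rotate (σs r) := by
    have : (s.rotate (σs r)).length = n := by simp [hslen]
    rw [← this, List.take_length]
  have ht_take : (t.rotate (σt r)).take n = t.rotate (σt r) := by
    have : (t.rotate (σt r)).length = n := by simp [htlen]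
    rw [← this, List.take_length]
  rw [hs_take, ht_take] at hpt
  have hσs0 : σs r = 0 := by
    have := (hσs r hr).1
    refine rank_injOn hπ hsprim (by omega) (by omega) ?_
    rw [(hσs r hr).2]
  have hσt0 : σt r = 0 := by
    have := (hσt r hr).1
    refine rank_injOn hπ htprim (by omega) (by omega) ?_
    rw [(hσt r hr).2, ← hrow']
  rw [hσs0, hσt0, List.rotate_zero, List.rotate_zero] at hpt
  exact hpt
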